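/- Let N ≥ 1 be an integer, let 0 < L ≤ U be reals with κ = U/L, and let x_1, …, x_M ∈ ℝ^N (M ≥ 1) be vectors all of whose entries lie in [L, U]. Define w(p) = ln (max_{j ∈ {1,…,M}} f(x_j, p)) for nonzero real p, where f(x, p) = ((1/N)·∑_{i=1}^N x_i^p)^{1/p}. Then for all nonzero reals p < q ≤ 1, w(q) − w(p) ≤ (q − p)·κ·ln κ. -/

import Mathlib

open Real BigOperators Finset

/-- Generalized `p`-mean of a vector `x ∈ ℝ^N` for nonzero real exponent `p`. -/
noncomputable def pmean {N : ℕ} (x : Fin N → ℝ) (p : ℝ) : ℝ :=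
  ((1 / N : ℝ) * ∑ i, x i ^ p) ^ (1 / p)

namespace PMeanAux

variable {N : ℕ}

noncomputable def phiF (a : Fin N → ℝ) (t : ℝ) : ℝ :=
  Real.log ((1 / N : ℝ) * ∑ i, Real.exp (t * a i))

noncomputable def phiD (a : Fin N → ℝ) (t : ℝ) : ℝ :=
  (∑ i, a i * Real.exp (t * a i)) / (∑ i, Real.exp (t * a i))

noncomputable def phiDD (a : Fin N → ℝ) (t : ℝ) : ℝ :=
  ((∑ i, (a i)^2 * Real.exp (t * a i)) * (∑ i, Real.exp (t * a i))
    - (∑ i, a i * Real.exp (t * a i)) * (∑ i, a i * Real.exp (t * a i)))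
    / (∑ i, Real.exp (t * a i))^2

lemma S_pos (hN : 0 < N) (a : Fin N → ℝ) (t : ℝ) : 0 < ∑ i, Real.exp (t * a i) :=
  Finset.sum_pos (fun i _ => Real.exp_pos _) ⟨⟨0, hN⟩, Finset.mem_univ _⟩

lemma hasDerivAt_S (a : Fin N → ℝ) (t : ℝ) :
    HasDerivAt (fun t => ∑ i, Real.exp (t * a i)) (∑ i, a i * Real.exp (t * a i)) t := by
  apply HasDerivAt.fun_sum
  intro i _
  simpa [mul_comm] using ((hasDerivAt_id t).mul_const (a i)).exp

lemma hasDerivAt_T (a : Fin N → ℝ) (t : ℝ) :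
    HasDerivAt (fun t => ∑ i, a i * Real.exp (t * a i)) (∑ i, (a i)^2 * Real.exp (t * a i)) t := by
  apply HasDerivAt.fun_sum
  intro i _
  have h := (((hasDerivAt_id t).mul_const (a i)).exp).const_mul (a i)
  simpa [sq, mul_comm, mul_assoc, mul_left_comm] using h

lemma hasDerivAt_phiF (hN : 0 < N) (a : Fin N → ℝ) (t : ℝ) :
    HasDerivAt (phiF a) (phiD a t) t := by
  have hfun : phiF a = fun t => Real.log (1 / N : ℝ) + Real.log (∑ i, Real.exp (t * a i)) := by
    funext s
    rw [phiF, Real.log_mul (by positivity) (S_pos hN a s).ne']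
  rw [hfun]
  exact ((hasDerivAt_S a t).log (S_pos hN a t).ne').const_add _

lemma hasDerivAt_phiD (hN : 0 < N) (a : Fin N → ℝ) (t : ℝ) :
    HasDerivAt (phiD a) (phiDD a t) t :=
  (hasDerivAt_T a t).div (hasDerivAt_S a t) (S_pos hN a t).ne'

lemma phiDD_nonneg (a : Fin N → ℝ) (t : ℝ) : 0 ≤ phiDD a t := by
  apply div_nonneg _ (sq_nonneg _)
  have hcs := Finset.sum_mul_sq_le_sq_mul_sq Finset.univ
    (fun i => a i * Real.sqrt (Real.exp (t * a i))) (fun i => Real.sqrt (Real.exp (t * a i)))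
  have hsq : ∀ i : Fin N, Real.sqrt (Real.exp (t * a i)) ^ 2 = Real.exp (t * a i) :=
    fun i => Real.sq_sqrt (Real.exp_pos _).le
  have h1 : ∀ i : Fin N, a i * Real.sqrt (Real.exp (t * a i)) * Real.sqrt (Real.exp (t * a i))
      = a i * Real.exp (t * a i) := by
    intro i
    rw [mul_assoc, ← sq, hsq i]
  have h2 : ∀ i : Fin N, (a i * Real.sqrt (Real.exp (t * a i))) ^ 2
      = (a i)^2 * Real.exp (t * a i) := by
    intro i
    rw [mul_pow, hsq i]
  simp only [h1, h2, hsq] at hcs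
  nlinarith [hcs]

lemma phiDD_le (a : Fin N → ℝ) {m M : ℝ} (ham : ∀ i, a i ∈ Set.Icc m M) (t : ℝ) (hN : 0 < N) :
    phiDD a t ≤ ((M - m) / 2)^2 := by
  rw [phiDD, div_le_iff₀ (pow_pos (S_pos hN a t) 2)]
  set c : ℝ := (m + M) / 2 with hc
  set w : Fin N → ℝ := fun i => Real.exp (t * a i) with hw
  have hwpos : ∀ i, 0 < w i := fun i => Real.exp_pos _
  have e1 : ∑ i, (a i - c)^2 * w i
      = (∑ i, (a i)^2 * w i) - 2*c*(∑ i, a i * w i) + c^2 * (∑ i, w i) := by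
    rw [Finset.mul_sum, Finset.mul_sum, ← Finset.sum_sub_distrib, ← Finset.sum_add_distrib]
    exact Finset.sum_congr rfl fun i _ => by ring
  have e2 : ∑ i, (a i - c) * w i = (∑ i, a i * w i) - c * (∑ i, w i) := by
    rw [Finset.mul_sum, ← Finset.sum_sub_distrib]
    exact Finset.sum_congr rfl fun i _ => by ring
  have hb : ∑ i, (a i - c)^2 * w i ≤ ((M - m)/2)^2 * ∑ i, w i := by
    rw [Finset.mul_sum]
    apply Finset.sum_le_sum
    intro i _
    apply mul_le_mul_of_nonneg_right _ (hwpos i).le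
    have h₁ := (ham i).1
    have h₂ := (ham i).2
    have : |a i - c| ≤ (M - m)/2 := by
      rw [abs_le]; constructor <;> simp [hc] <;> linarith
    calc (a i - c)^2 = |a i - c|^2 := (sq_abs _).symm
      _ ≤ ((M-m)/2)^2 := by
          apply pow_le_pow_left₀ (abs_nonneg _) this
  -- variance identity + bound
  have hSpos : (0:ℝ) < ∑ i, w i := S_pos hN a t
  show (∑ i, (a i)^2 * w i) * (∑ i, w i) - (∑ i, a i * w i) * (∑ i, a i * w i)
      ≤ ((M - m)/2)^2 * (∑ i, w i)^2
  have key : (∑ i, (a i)^2 * w i) * (∑ i, w i) - (∑ i, a i * w i) * (∑ i, a i * w i)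
      = (∑ i, (a i - c)^2 * w i) * (∑ i, w i) - (∑ i, (a i - c) * w i)^2 := by
    rw [e1, e2]; ring
  rw [key]
  nlinarith [sq_nonneg (∑ i, (a i - c) * w i), mul_le_mul_of_nonneg_right hb hSpos.le]

/-- If `f 0 = 0`, `f' 0 = 0` and `f'' ≥ 0` everywhere, then `f ≥ 0`. -/
lemma nonneg_of_deriv2 (f f' f'' : ℝ → ℝ) (hf : ∀ t, HasDerivAt f (f' t) t)
    (hf' : ∀ t, HasDerivAt f' (f'' t) t) (h0 : f 0 = 0) (h0' : f' 0 = 0)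
    (h2 : ∀ t, 0 ≤ f'' t) : ∀ t, 0 ≤ f t := by
  have hdf : Differentiable ℝ f := fun t => (hf t).differentiableAt
  have hdf' : Differentiable ℝ f' := fun t => (hf' t).differentiableAt
  have hmono : Monotone f' := by
    apply monotone_of_deriv_nonneg hdf'
    intro x; rw [(hf' x).deriv]; exact h2 x
  intro t
  rcases le_or_gt 0 t with ht | ht
  · have : MonotoneOn f (Set.Ici 0) := by
      apply monotoneOn_of_deriv_nonneg (convex_Ici 0) hdf.continuous.continuousOn
        hdf.differentiableOn
      intro x hx
      rw [interior_Ici, Set.mem_Ioi] at hx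
      rw [(hf x).deriv]
      have := hmono hx.le
      linarith [h0' ▸ this]
    have := this (Set.mem_Ici.2 le_rfl) (Set.mem_Ici.2 ht) ht
    linarith [h0 ▸ this]
  · have : AntitoneOn f (Set.Iic 0) := by
      apply antitoneOn_of_deriv_nonpos (convex_Iic 0) hdf.continuous.continuousOn
        hdf.differentiableOn
      intro x hx
      rw [interior_Iic, Set.mem_Iio] at hx
      rw [(hf x).deriv]
      have := hmono hx.le
      linarith [h0' ▸ this]
    have := this (Set.mem_Iic.2 ht.le) (Set.mem_Iic.2 le_rfl) ht.le
    linarith [h0 ▸ this]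


noncomputable def Abar (a : Fin N → ℝ) : ℝ := (∑ i, a i) / N

lemma phiF_zero (hN : 0 < N) (a : Fin N → ℝ) : phiF a 0 = 0 := by
  have h : (∑ i : Fin N, Real.exp (0 * a i)) = N := by simp
  rw [phiF, h, one_div, inv_mul_cancel₀ (by exact_mod_cast hN.ne'), Real.log_one]

lemma phiD_zero (a : Fin N → ℝ) : phiD a 0 = Abar a := by
  simp [phiD, Abar]

lemma jensen (hN : 0 < N) (a : Fin N → ℝ) (t : ℝ) : t * Abar a ≤ phiF a t := by
  have h := nonneg_of_deriv2 (fun t => phiF a t - t * Abar a)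
    (fun t => phiD a t - Abar a) (phiDD a)
    (fun t => by simpa using (hasDerivAt_phiF hN a t).fun_sub ((hasDerivAt_id t).mul_const (Abar a)))
    (fun t => by simpa using (hasDerivAt_phiD hN a t).sub_const (Abar a))
    (by simp [phiF_zero hN a])
    (by simp [phiD_zero a])
    (fun t => phiDD_nonneg a t) t
  linarith

lemma hoeffding (hN : 0 < N) (a : Fin N → ℝ) {m M : ℝ} (ham : ∀ i, a i ∈ Set.Icc m M)
    (t : ℝ) : phiF a t ≤ t * Abar a + t^2 * (M - m)^2 / 8 := by
  set C : ℝ := ((M - m)/2)^2 with hC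
  have hsq : ∀ s : ℝ, HasDerivAt (fun t : ℝ => t^2 * C / 2) (s * C) s := by
    intro s
    have h := (hasDerivAt_pow 2 s).mul_const (C/2)
    have e : (fun t : ℝ => t^2 * C / 2) = fun y => y^2 * (C/2) := by funext u; ring
    rw [e]
    exact h.congr_deriv (by rw [show (2:ℕ) - 1 = 1 from rfl, pow_one]; push_cast; ring)
  have h := nonneg_of_deriv2 (fun t => t * Abar a + t^2 * C / 2 - phiF a t)
    (fun t => Abar a + t * C - phiD a t)
    (fun t => C - phiDD a t)
    (fun s => by
      simpa using (((hasDerivAt_id s).mul_const (Abar a)).fun_add (hsq s)).fun_sub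
        (hasDerivAt_phiF hN a s))
    (fun s => by
      simpa using (((hasDerivAt_id s).mul_const C).const_add (Abar a)).fun_sub
        (hasDerivAt_phiD hN a s))
    (by simp [phiF_zero hN a])
    (by simp [phiD_zero a])
    (fun s => sub_nonneg.2 (phiDD_le a ham s hN)) t
  have hCe : t^2 * C / 2 = t^2 * (M - m)^2 / 8 := by rw [hC]; ring
  linarith


lemma convexOn_phiF (hN : 0 < N) (a : Fin N → ℝ) : ConvexOn ℝ Set.univ (phiF a) := by
  have hdf : Differentiable ℝ (phiF a) := fun t => (hasDerivAt_phiF hN a t).differentiableAt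
  apply Monotone.convexOn_univ_of_deriv hdf
  have hd : deriv (phiF a) = phiD a := funext fun t => (hasDerivAt_phiF hN a t).deriv
  rw [hd]
  apply monotone_of_deriv_nonneg (fun t => (hasDerivAt_phiD hN a t).differentiableAt)
  intro t
  rw [(hasDerivAt_phiD hN a t).deriv]
  exact phiDD_nonneg a t

lemma core_pos (hN : 0 < N) (a : Fin N → ℝ) {m M : ℝ} (ham : ∀ i, a i ∈ Set.Icc m M)
    {p q : ℝ} (hp : 0 < p) (hpq : p < q) :
    phiF a q / q - phiF a p / p ≤ (q - p) * (M - m)^2 / 2 := by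
  have hq : 0 < q := hp.trans hpq
  set E : ℝ := (M - m)^2 with hE
  have hE0 : 0 ≤ E := sq_nonneg _
  set A : ℝ := Abar a with hA
  have h3 : p * A ≤ phiF a p := jensen hN a p
  rw [div_sub_div _ _ hq.ne' hp.ne', div_le_iff₀ (by positivity)]
  rcases le_or_gt (2*p) q with hcase | hcase
  · -- q ≥ 2p : Hoeffding at q, Jensen at p
    have h4 : phiF a q ≤ q * A + q^2 * E / 8 := hoeffding hN a ham q
    nlinarith [mul_le_mul_of_nonneg_right h4 hp.le, mul_le_mul_of_nonneg_right h3 hq.le,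
      mul_nonneg (mul_nonneg (mul_pos hp hq).le hE0) (by linarith : (0:ℝ) ≤ 3*q - 4*p)]
  · -- p < q < 2p : chord from p to 2p
    have h2 : phiF a (2*p) ≤ (2*p) * A + (2*p)^2 * E / 8 := hoeffding hN a ham (2*p)
    have hchord : phiF a q ≤ ((2*p - q)/p) * phiF a p + ((q - p)/p) * phiF a (2*p) := by
      have hmem : q = ((2*p - q)/p) • p + ((q - p)/p) • (2*p) := by
        simp only [smul_eq_mul]
        field_simp
        ring
      have := (convexOn_phiF hN a).2 (Set.mem_univ p) (Set.mem_univ (2*p))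
        (show (0:ℝ) ≤ (2*p - q)/p from div_nonneg (by linarith) hp.le)
        (show (0:ℝ) ≤ (q - p)/p from div_nonneg (by linarith) hp.le)
        (show (2*p - q)/p + (q - p)/p = 1 by field_simp; linarith)
      rw [← hmem] at this
      simpa using this
    have h1p : p * phiF a q ≤ (2*p - q) * phiF a p + (q - p) * phiF a (2*p) := by
      have := mul_le_mul_of_nonneg_left hchord hp.le
      calc p * phiF a q ≤ p * (((2*p - q)/p) * phiF a p + ((q - p)/p) * phiF a (2*p)) := this
        _ = (2*p - q) * phiF a p + (q - p) * phiF a (2*p) := by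
              first
              | (field_simp; ring)
              | field_simp
    nlinarith [h1p, mul_le_mul_of_nonneg_left h3 (by linarith : (0:ℝ) ≤ 2*(q-p)),
      mul_le_mul_of_nonneg_left h2 (by linarith : (0:ℝ) ≤ q - p),
      mul_nonneg (mul_nonneg (mul_nonneg (by linarith : (0:ℝ) ≤ q - p) hp.le)
        (by linarith : (0:ℝ) ≤ q - p)) hE0]

lemma core_mixed (hN : 0 < N) (a : Fin N → ℝ) {m M : ℝ} (ham : ∀ i, a i ∈ Set.Icc m M)
    {p q : ℝ} (hp : p < 0) (hq : 0 < q) :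
    phiF a q / q - phiF a p / p ≤ (q - p) * (M - m)^2 / 2 := by
  set E : ℝ := (M - m)^2 with hE
  have hE0 : 0 ≤ E := sq_nonneg _
  set A : ℝ := Abar a with hA
  have hup : phiF a p ≤ p * A + p^2 * E / 8 := hoeffding hN a ham p
  have huq : phiF a q ≤ q * A + q^2 * E / 8 := hoeffding hN a ham q
  have hq' : phiF a q / q ≤ A + q * E / 8 := by
    rw [div_le_iff₀ hq]; nlinarith
  have hp' : A + p * E / 8 ≤ phiF a p / p := by
    rw [le_div_iff_of_neg hp]; nlinarith
  nlinarith

lemma phiF_neg (a : Fin N → ℝ) (t : ℝ) : phiF (fun i => -(a i)) (-t) = phiF a t := by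
  simp [phiF, neg_mul_neg]

lemma core (hN : 0 < N) (a : Fin N → ℝ) {m M : ℝ} (ham : ∀ i, a i ∈ Set.Icc m M)
    {p q : ℝ} (hp : p ≠ 0) (hq : q ≠ 0) (hpq : p < q) :
    phiF a q / q - phiF a p / p ≤ (q - p) * (M - m)^2 / 2 := by
  rcases lt_or_gt_of_ne hp with hpneg | hppos
  · rcases lt_or_gt_of_ne hq with hqneg | hqpos
    · -- p < q < 0 : reflect
      have hb : ∀ i, (fun i => -(a i)) i ∈ Set.Icc (-M) (-m) := fun i =>
        ⟨neg_le_neg (ham i).2, neg_le_neg (ham i).1⟩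
      have h := core_pos hN (fun i => -(a i)) hb (by linarith : (0:ℝ) < -q)
        (by linarith : -q < -p)
      rw [phiF_neg a p, phiF_neg a q] at h
      have e : -m - -M = M - m := by ring
      rw [e] at h
      have e2 : (-p - -q) = q - p := by ring
      rw [e2] at h
      calc phiF a q / q - phiF a p / p
          = phiF a p / -p - phiF a q / -q := by rw [div_neg, div_neg]; ring
        _ ≤ (q - p) * (M - m)^2 / 2 := h
    · exact core_mixed hN a ham hpneg hqpos
  · exact core_pos hN a ham hppos hpq


lemma log_pmean (hN : 0 < N) (x : Fin N → ℝ) (hx : ∀ i, 0 < x i) (t : ℝ) :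
    Real.log (pmean x t) = phiF (fun i => Real.log (x i)) t / t := by
  have hbase : (0:ℝ) < (1/N : ℝ) * ∑ i, x i ^ t :=
    mul_pos (by positivity)
      (Finset.sum_pos (fun i _ => Real.rpow_pos_of_pos (hx i) t) ⟨⟨0, hN⟩, Finset.mem_univ _⟩)
  rw [pmean, Real.log_rpow hbase, phiF]
  have h : ∀ i : Fin N, Real.exp (t * Real.log (x i)) = x i ^ t := fun i => by
    rw [Real.rpow_def_of_pos (hx i), mul_comm]
  simp_rw [h]
  ring

lemma single (hN : 0 < N) (x : Fin N → ℝ) {L U : ℝ} (hL : 0 < L) (hLU : L ≤ U)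
    (hx : ∀ i, x i ∈ Set.Icc L U) {p q : ℝ} (hp : p ≠ 0) (hq : q ≠ 0) (hpq : p < q) :
    Real.log (pmean x q) - Real.log (pmean x p) ≤ (q - p) * (U/L * Real.log (U/L)) := by
  have hxpos : ∀ i, 0 < x i := fun i => hL.trans_le (hx i).1
  have ham : ∀ i, Real.log (x i) ∈ Set.Icc (Real.log L) (Real.log U) := fun i =>
    ⟨Real.log_le_log hL (hx i).1, Real.log_le_log (hxpos i) (hx i).2⟩
  have h := core hN (fun i => Real.log (x i)) ham hp hq hpq
  rw [log_pmean hN x hxpos q, log_pmean hN x hxpos p]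
  refine h.trans ?_
  have hU : (0:ℝ) < U := hL.trans_le hLU
  have hUL : (0:ℝ) < U/L := div_pos hU hL
  have hRe : Real.log U - Real.log L = Real.log (U/L) :=
    (Real.log_div hU.ne' hL.ne').symm
  rw [hRe]
  set R : ℝ := Real.log (U/L) with hR
  have hR0 : 0 ≤ R := Real.log_nonneg ((one_le_div hL).2 hLU)
  have hRle : R ≤ 2 * (U/L) := by
    have h1 : R ≤ U/L - 1 := Real.log_le_sub_one_of_pos hUL
    have h2 : (0:ℝ) < U/L := hUL
    linarith
  nlinarith [mul_nonneg (mul_nonneg (sub_nonneg.2 hpq.le) hR0) (sub_nonneg.2 hRle)]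

end PMeanAux

/-- The log of the maximum `p`-mean value over a finite family of vectors with entries
in `[L, U]` (with `0 < L ≤ U`, `κ = U/L`) is `(κ·ln κ)`-Lipschitz in the exponent:
`w(q) − w(p) ≤ (q − p)·κ·ln κ` for nonzero `p < q ≤ 1`. -/
theorem log_max_pmean_lipschitz {N M : ℕ} (hN : 1 ≤ N) (hM : 1 ≤ M)
    (L U : ℝ) (hL : 0 < L) (hLU : L ≤ U) (κ : ℝ) (hκ : κ = U / L)
    (x : Fin M → Fin N → ℝ) (hx : ∀ j i, x j i ∈ Set.Icc L U)
    (w : ℝ → ℝ)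
    (hw : ∀ p : ℝ, w p =
      Real.log (Finset.univ.sup' ⟨⟨0, hM⟩, Finset.mem_univ _⟩ fun j => pmean (x j) p))
    (p q : ℝ) (hp : p ≠ 0) (hq : q ≠ 0) (hpq : p < q) (hq1 : q ≤ 1) :
    w q - w p ≤ (q - p) * (κ * Real.log κ) := by
  have hN0 : 0 < N := hN
  have hpos : ∀ (j : Fin M) (t : ℝ), 0 < pmean (x j) t := fun j t =>
    Real.rpow_pos_of_pos
      (mul_pos (by positivity)
        (Finset.sum_pos (fun i _ => Real.rpow_pos_of_pos (hL.trans_le (hx j i).1) t)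
          ⟨⟨0, hN0⟩, Finset.mem_univ _⟩)) _
  obtain ⟨j0, -, hj0⟩ := Finset.exists_mem_eq_sup'
    (⟨⟨0, hM⟩, Finset.mem_univ _⟩ : (Finset.univ : Finset (Fin M)).Nonempty)
    (fun j => pmean (x j) q)
  have hwq : w q = Real.log (pmean (x j0) q) := by rw [hw q, hj0]
  have hwp : Real.log (pmean (x j0) p) ≤ w p := by
    rw [hw p]
    exact Real.log_le_log (hpos j0 p) (Finset.le_sup' (fun j => pmean (x j) p) (Finset.mem_univ j0))
  have hsingle := PMeanAux.single hN0 (x j0) hL hLU (hx j0) hp hq hpq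
  rw [hκ]
  calc w q - w p ≤ Real.log (pmean (x j0) q) - Real.log (pmean (x j0) p) := by
        rw [hwq]; linarith
    _ ≤ (q - p) * (U/L * Real.log (U/L)) := hsingle
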